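/- arXiv:2208.08638 — 2 statements merged into one kernel-verified Lean document; each statement's English description precedes it below -/
import Mathlib

section
/- Let P and E be n×n real matrices and R a subset of {1,…,n} with |R| ≤ r. Assume |P_{ij}| ≤ ν for all i,j; E_{ij} = 0 whenever i ∉ R and j ∉ R; |E_{ij}| ≤ ε for all i,j; and σ is a permutation of {1,…,n} with |{i : σ(i) ≠ i}| ≤ ℓ. Then | ∑_{i,j} (P_{σ(i)σ(j)} − P_{ij}) · E_{ij} | ≤ 4 n ν ε · min(ℓ, r). -/
open Finset

/-- With `|P i j| ≤ ν`, `E` supported on rows/columns of a set `R` of at most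
`r` indices, `|E i j| ≤ ε`, and `σ` a permutation moving at most `ℓ` indices,
`|∑ i j, (P (σ i) (σ j) − P i j)·E i j| ≤ 4 n ν ε · min(ℓ, r)`. -/
theorem shuffle_cross_term_bound
    {n : ℕ} (P E : Matrix (Fin n) (Fin n) ℝ) (R : Finset (Fin n)) (r ℓ : ℕ) (ν ε : ℝ)
    (hR : R.card ≤ r)
    (hP : ∀ i j, |P i j| ≤ ν)
    (hE0 : ∀ i j, i ∉ R → j ∉ R → E i j = 0)
    (hEε : ∀ i j, |E i j| ≤ ε)
    (σ : Equiv.Perm (Fin n))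
    (hσ : (Finset.univ.filter fun i => σ i ≠ i).card ≤ ℓ) :
    |∑ i, ∑ j, (P (σ i) (σ j) - P i j) * E i j| ≤
      4 * (n : ℝ) * ν * ε * ((min ℓ r : ℕ) : ℝ) := by
  rcases Nat.eq_zero_or_pos n with h0 | hn
  · subst h0; simp
  have i0 : Fin n := ⟨0, hn⟩
  have hν : 0 ≤ ν := le_trans (abs_nonneg _) (hP i0 i0)
  have hε : 0 ≤ ε := le_trans (abs_nonneg _) (hEε i0 i0)
  set M : Finset (Fin n) := Finset.univ.filter fun i => σ i ≠ i with hM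
  set T : Finset (Fin n × Fin n) := (univ ×ˢ univ).filter
      (fun p => (p.1 ∈ R ∨ p.2 ∈ R) ∧ (σ p.1 ≠ p.1 ∨ σ p.2 ≠ p.2)) with hT
  have hsum : ∑ i, ∑ j, (P (σ i) (σ j) - P i j) * E i j
      = ∑ p ∈ T, (P (σ p.1) (σ p.2) - P p.1 p.2) * E p.1 p.2 := by
    rw [← Finset.sum_product']
    refine (Finset.sum_subset (Finset.filter_subset _ _) ?_).symm
    intro p _ hp
    simp only [hT, Finset.mem_filter, Finset.mem_product, Finset.mem_univ, true_and,
      not_and_or, not_or, not_not] at hp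
    rcases hp with ⟨h1, h2⟩ | ⟨h1, h2⟩
    · rw [hE0 _ _ h1 h2, mul_zero]
    · rw [h1, h2, sub_self, zero_mul]
  have hterm : ∀ p ∈ T, |(P (σ p.1) (σ p.2) - P p.1 p.2) * E p.1 p.2| ≤ 2 * ν * ε := by
    intro p _
    rw [abs_mul]
    have h1 : |P (σ p.1) (σ p.2) - P p.1 p.2| ≤ 2 * ν := by
      calc |P (σ p.1) (σ p.2) - P p.1 p.2| ≤ |P (σ p.1) (σ p.2)| + |P p.1 p.2| :=
        abs_sub _ _
      _ ≤ ν + ν := add_le_add (hP _ _) (hP _ _)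
      _ = 2 * ν := by ring
    exact mul_le_mul h1 (hEε _ _) (abs_nonneg _) (by positivity)
  have hcard : T.card ≤ 2 * n * min ℓ r := by
    have hc1 : T.card ≤ 2 * n * ℓ := by
      have hsub : T ⊆ M ×ˢ univ ∪ univ ×ˢ M := by
        intro p hp
        simp only [hT, Finset.mem_filter, Finset.mem_product, Finset.mem_univ, true_and] at hp
        rcases hp.2 with h | h
        · exact Finset.mem_union_left _ (by simp [hM, h])
        · exact Finset.mem_union_right _ (by simp [hM, h])
      calc T.card ≤ (M ×ˢ univ ∪ univ ×ˢ M).card := Finset.card_le_card hsub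
      _ ≤ (M ×ˢ (univ : Finset (Fin n))).card + ((univ : Finset (Fin n)) ×ˢ M).card :=
          Finset.card_union_le _ _
      _ = M.card * n + n * M.card := by
          simp [Finset.card_product]
      _ ≤ ℓ * n + n * ℓ := by
          gcongr
      _ = 2 * n * ℓ := by ring
    have hc2 : T.card ≤ 2 * n * r := by
      have hsub : T ⊆ R ×ˢ univ ∪ univ ×ˢ R := by
        intro p hp
        simp only [hT, Finset.mem_filter, Finset.mem_product, Finset.mem_univ, true_and] at hp
        rcases hp.1 with h | h
        · exact Finset.mem_union_left _ (by simp [h])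
        · exact Finset.mem_union_right _ (by simp [h])
      calc T.card ≤ (R ×ˢ univ ∪ univ ×ˢ R).card := Finset.card_le_card hsub
      _ ≤ (R ×ˢ (univ : Finset (Fin n))).card + ((univ : Finset (Fin n)) ×ˢ R).card :=
          Finset.card_union_le _ _
      _ = R.card * n + n * R.card := by
          simp [Finset.card_product]
      _ ≤ r * n + n * r := by gcongr
      _ = 2 * n * r := by ring
    rcases le_total ℓ r with h | h
    · simpa [min_eq_left h] using hc1
    · simpa [min_eq_right h] using hc2
  calc |∑ i, ∑ j, (P (σ i) (σ j) - P i j) * E i j|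
      = |∑ p ∈ T, (P (σ p.1) (σ p.2) - P p.1 p.2) * E p.1 p.2| := by rw [hsum]
    _ ≤ ∑ p ∈ T, |(P (σ p.1) (σ p.2) - P p.1 p.2) * E p.1 p.2| := Finset.abs_sum_le_sum_abs _ _
    _ ≤ ∑ _p ∈ T, 2 * ν * ε := Finset.sum_le_sum hterm
    _ = (T.card : ℝ) * (2 * ν * ε) := by rw [Finset.sum_const, nsmul_eq_mul]
    _ ≤ ((2 * n * min ℓ r : ℕ) : ℝ) * (2 * ν * ε) := by
        have : (T.card : ℝ) ≤ ((2 * n * min ℓ r : ℕ) : ℝ) := by exact_mod_cast hcard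
        exact mul_le_mul_of_nonneg_right this (by positivity)
    _ = 4 * (n : ℝ) * ν * ε * ((min ℓ r : ℕ) : ℝ) := by
        push_cast
        ring
end

section
/- Let K ≥ 2, let V be a finite set, b : V → {1,…,K} a block assignment with block sizes n_h = |b⁻¹(h)|, ν a real number, and Λ a symmetric K×K real matrix. Define the V×V matrix P by P_{vw} = ν·Λ_{b(v),b(w)}. Let S₁ ⊆ b⁻¹(1) and S₂ ⊆ b⁻¹(2) with |S₁| = |S₂| = m, and let σ be a permutation of V with σ(S₁) = S₂ and σ(v) = v for all v ∉ S₁ ∪ S₂. Then ∑_{v,w∈V} (P_{vw} − P_{σ(v)σ(w)})² = 2m²ν²(Λ₁₁−Λ₂₂)² + 4m(n₁−m)ν²(Λ₁₁−Λ₁₂)² + 4m(n₂−m)ν²(Λ₂₂−Λ₁₂)² + 4m·∑_{h=3}^{K} n_h ν² (Λ_{h1}−Λ_{h2})². -/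
open Finset

/-- In a stochastic block model with `K ≥ 2` blocks, symmetric block matrix `Λ`,
sparsity `ν`, and edge-probability matrix `P v w = ν Λ_{b(v) b(w)}`, if `σ` interchanges a set
`S₁` of `m` vertices of block 1 with a set `S₂` of `m` vertices of block 2 and fixes all other
vertices, then
`∑ v w, (P v w − P (σ v) (σ w))² = 2m²ν²(Λ₁₁−Λ₂₂)² + 4m(n₁−m)ν²(Λ₁₁−Λ₁₂)²
  + 4m(n₂−m)ν²(Λ₂₂−Λ₁₂)² + 4m ∑_{h=3}^{K} n_h ν² (Λ_{h1}−Λ_{h2})²`.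
(Blocks `1, 2` are indexed here by `⟨0,_⟩, ⟨1,_⟩ : Fin K`.) -/
theorem sbm_block_shuffle_frobenius_sq
    {K : ℕ} (hK : 2 ≤ K) {V : Type*} [Fintype V] [DecidableEq V]
    (b : V → Fin K) (ν : ℝ) (Λ : Matrix (Fin K) (Fin K) ℝ) (hΛ : Λ.IsSymm)
    (nb : Fin K → ℕ) (hnb : ∀ h, nb h = (Finset.univ.filter fun v => b v = h).card)
    (P : V → V → ℝ) (hP : ∀ v w, P v w = ν * Λ (b v) (b w))
    (m : ℕ) (S₁ S₂ : Finset V)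
    (hS₁ : ∀ v ∈ S₁, b v = ⟨0, by omega⟩) (hS₂ : ∀ v ∈ S₂, b v = ⟨1, by omega⟩)
    (hcard₁ : S₁.card = m) (hcard₂ : S₂.card = m)
    (σ : Equiv.Perm V) (hσ : S₁.image σ = S₂)
    (hfix : ∀ v, v ∉ S₁ ∪ S₂ → σ v = v) :
    ∑ v, ∑ w, (P v w - P (σ v) (σ w)) ^ 2 =
      2 * (m : ℝ) ^ 2 * ν ^ 2 * (Λ ⟨0, by omega⟩ ⟨0, by omega⟩ - Λ ⟨1, by omega⟩ ⟨1, by omega⟩) ^ 2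
      + 4 * (m : ℝ) * ((nb ⟨0, by omega⟩ : ℝ) - (m : ℝ)) * ν ^ 2 *
          (Λ ⟨0, by omega⟩ ⟨0, by omega⟩ - Λ ⟨0, by omega⟩ ⟨1, by omega⟩) ^ 2
      + 4 * (m : ℝ) * ((nb ⟨1, by omega⟩ : ℝ) - (m : ℝ)) * ν ^ 2 *
          (Λ ⟨1, by omega⟩ ⟨1, by omega⟩ - Λ ⟨0, by omega⟩ ⟨1, by omega⟩) ^ 2
      + 4 * (m : ℝ) * ∑ h ∈ (Finset.univ \ {⟨0, by omega⟩, ⟨1, by omega⟩} : Finset (Fin K)),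
          (nb h : ℝ) * ν ^ 2 * (Λ h ⟨0, by omega⟩ - Λ h ⟨1, by omega⟩) ^ 2 := by
  have h0 : (0 : ℕ) < K := by omega
  have h1 : (1 : ℕ) < K := by omega
  set z0 : Fin K := ⟨0, h0⟩ with hz0def
  set z1 : Fin K := ⟨1, h1⟩ with hz1def
  have hzne : z0 ≠ z1 := by simp [hz0def, hz1def, Fin.ext_iff]
  have hS₁' : ∀ v ∈ S₁, b v = z0 := hS₁
  have hS₂' : ∀ v ∈ S₂, b v = z1 := hS₂
  have hdis : Disjoint S₁ S₂ := by
    rw [Finset.disjoint_left]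
    intro v h1v h2v
    exact hzne ((hS₁' v h1v).symm.trans (hS₂' v h2v))
  have hσ1 : ∀ v ∈ S₁, σ v ∈ S₂ := fun v hv => hσ ▸ Finset.mem_image_of_mem σ hv
  have hσ2 : ∀ v ∈ S₂, σ v ∈ S₁ := by
    intro v hv
    have hmem : σ v ∈ S₁ ∪ S₂ := by
      by_contra h
      have h2 := hfix _ h
      have : σ v = v := σ.injective h2
      exact h (by rw [this]; exact Finset.mem_union_right _ hv)
    rcases Finset.mem_union.mp hmem with h' | h'
    · exact h'
    · exfalso
      rw [← hσ] at h'
      obtain ⟨u, hu, huv⟩ := Finset.mem_image.mp h'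
      have : u = v := σ.injective huv
      exact (Finset.disjoint_left.mp hdis (this ▸ hu)) hv
  set R : Finset V := Finset.univ \ (S₁ ∪ S₂) with hRdef
  have hRmem : ∀ v, v ∈ R ↔ v ∉ S₁ ∧ v ∉ S₂ := by
    intro v; simp [hRdef, not_or]
  have hbσ1 : ∀ v ∈ S₁, b (σ v) = z1 := fun v hv => hS₂' _ (hσ1 v hv)
  have hbσ2 : ∀ v ∈ S₂, b (σ v) = z0 := fun v hv => hS₁' _ (hσ2 v hv)
  have hbσR : ∀ v ∈ R, b (σ v) = b v := by
    intro v hv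
    rw [hfix v (Finset.mem_sdiff.mp hv).2]
  have hQ : ∀ v w, (P v w - P (σ v) (σ w)) ^ 2
      = ν ^ 2 * (Λ (b v) (b w) - Λ (b (σ v)) (b (σ w))) ^ 2 := by
    intro v w; rw [hP, hP]; ring
  have hsplit : ∀ f : V → ℝ,
      ∑ v, f v = ∑ v ∈ S₁, f v + ∑ v ∈ S₂, f v + ∑ v ∈ R, f v := by
    intro f
    have h1 : ∑ v ∈ R, f v + ∑ v ∈ S₁ ∪ S₂, f v = ∑ v, f v :=
      Finset.sum_sdiff (Finset.subset_univ _)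
    rw [← h1, Finset.sum_union hdis]; ring
  set T : ℝ := ∑ w ∈ R, ν ^ 2 * (Λ z0 (b w) - Λ z1 (b w)) ^ 2 with hTdef
  -- inner sum evaluation
  have inner_eval : ∀ c c' : Fin K,
      ∑ w, ν ^ 2 * (Λ c (b w) - Λ c' (b (σ w))) ^ 2
        = (m : ℝ) * (ν ^ 2 * (Λ c z0 - Λ c' z1) ^ 2)
          + (m : ℝ) * (ν ^ 2 * (Λ c z1 - Λ c' z0) ^ 2)
          + ∑ w ∈ R, ν ^ 2 * (Λ c (b w) - Λ c' (b w)) ^ 2 := by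
    intro c c'
    rw [hsplit]
    congr 1
    · congr 1
      · rw [Finset.sum_congr rfl (fun w hw => by rw [hS₁' w hw, hbσ1 w hw]),
          Finset.sum_const, hcard₁, nsmul_eq_mul]
      · rw [Finset.sum_congr rfl (fun w hw => by rw [hS₂' w hw, hbσ2 w hw]),
          Finset.sum_const, hcard₂, nsmul_eq_mul]
    · exact Finset.sum_congr rfl fun w hw => by rw [hbσR w hw]
  have main : ∑ v, ∑ w, (P v w - P (σ v) (σ w)) ^ 2
      = 2 * (m : ℝ) ^ 2 * ν ^ 2 * (Λ z0 z0 - Λ z1 z1) ^ 2 + 4 * (m : ℝ) * T := by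
    have hrw : ∑ v, ∑ w, (P v w - P (σ v) (σ w)) ^ 2
        = ∑ v, ∑ w, ν ^ 2 * (Λ (b v) (b w) - Λ (b (σ v)) (b (σ w))) ^ 2 := by
      exact Finset.sum_congr rfl fun v _ => Finset.sum_congr rfl fun w _ => hQ v w
    rw [hrw, hsplit]
    have e1 : ∑ v ∈ S₁, ∑ w, ν ^ 2 * (Λ (b v) (b w) - Λ (b (σ v)) (b (σ w))) ^ 2
        = (m : ℝ) * ((m : ℝ) * (ν ^ 2 * (Λ z0 z0 - Λ z1 z1) ^ 2) + T) := by
      rw [Finset.sum_congr rfl (fun v hv => by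
        rw [Finset.sum_congr rfl (fun w _ => by rw [hS₁' v hv, hbσ1 v hv]), inner_eval z0 z1]),
        Finset.sum_const, hcard₁, nsmul_eq_mul]
      have hx : Λ z0 z1 - Λ z1 z0 = 0 := by rw [hΛ.apply z0 z1]; ring
      rw [hx, hTdef]; ring
    have e2 : ∑ v ∈ S₂, ∑ w, ν ^ 2 * (Λ (b v) (b w) - Λ (b (σ v)) (b (σ w))) ^ 2
        = (m : ℝ) * ((m : ℝ) * (ν ^ 2 * (Λ z0 z0 - Λ z1 z1) ^ 2) + T) := by
      rw [Finset.sum_congr rfl (fun v hv => by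
        rw [Finset.sum_congr rfl (fun w _ => by rw [hS₂' v hv, hbσ2 v hv]), inner_eval z1 z0]),
        Finset.sum_const, hcard₂, nsmul_eq_mul]
      have hx : Λ z1 z0 - Λ z0 z1 = 0 := by rw [hΛ.apply z0 z1]; ring
      have hy : ∑ w ∈ R, ν ^ 2 * (Λ z1 (b w) - Λ z0 (b w)) ^ 2 = T := by
        rw [hTdef]; exact Finset.sum_congr rfl fun w _ => by ring
      rw [hx, hy]; ring
    have e3 : ∑ v ∈ R, ∑ w, ν ^ 2 * (Λ (b v) (b w) - Λ (b (σ v)) (b (σ w))) ^ 2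
        = 2 * (m : ℝ) * T := by
      have estep : ∀ v ∈ R, ∑ w, ν ^ 2 * (Λ (b v) (b w) - Λ (b (σ v)) (b (σ w))) ^ 2
          = 2 * ((m : ℝ) * (ν ^ 2 * (Λ z0 (b v) - Λ z1 (b v)) ^ 2)) := by
        intro v hv
        rw [Finset.sum_congr rfl (fun w _ => by rw [hbσR v hv]), inner_eval (b v) (b v)]
        have hz : ∑ w ∈ R, ν ^ 2 * (Λ (b v) (b w) - Λ (b v) (b w)) ^ 2 = 0 := by
          simp
        rw [hz, hΛ.apply (b v) z0, hΛ.apply (b v) z1]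
        ring
      rw [Finset.sum_congr rfl estep, ← Finset.mul_sum, hTdef, ← Finset.mul_sum]
      ring
    rw [e1, e2, e3]; ring
  -- evaluate T by fibers
  have hfib : T = ∑ h : Fin K,
      ((R.filter fun w => b w = h).card : ℝ) * (ν ^ 2 * (Λ z0 h - Λ z1 h) ^ 2) := by
    rw [hTdef, ← Finset.sum_fiberwise' R b (fun h => ν ^ 2 * (Λ z0 h - Λ z1 h) ^ 2)]
    exact Finset.sum_congr rfl fun h _ => by rw [Finset.sum_const, nsmul_eq_mul]
  have hc0 : ((R.filter fun w => b w = z0).card : ℝ) = (nb z0 : ℝ) - m := by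
    have hsub : S₁ ⊆ Finset.univ.filter fun v => b v = z0 :=
      fun v hv => Finset.mem_filter.mpr ⟨Finset.mem_univ v, hS₁' v hv⟩
    have heq : R.filter (fun w => b w = z0) = (Finset.univ.filter fun v => b v = z0) \ S₁ := by
      ext v
      simp only [Finset.mem_filter, Finset.mem_sdiff, Finset.mem_univ, true_and]
      constructor
      · rintro ⟨hv, hb⟩; exact ⟨hb, ((hRmem v).1 hv).1⟩
      · rintro ⟨hb, h1v⟩
        exact ⟨(hRmem v).2 ⟨h1v, fun h2v => hzne (hb.symm.trans (hS₂' v h2v))⟩, hb⟩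
    have hle : m ≤ (Finset.univ.filter fun v => b v = z0).card :=
      hcard₁ ▸ Finset.card_le_card hsub
    rw [heq, Finset.card_sdiff_of_subset hsub, hcard₁, Nat.cast_sub hle, hnb]
  have hc1 : ((R.filter fun w => b w = z1).card : ℝ) = (nb z1 : ℝ) - m := by
    have hsub : S₂ ⊆ Finset.univ.filter fun v => b v = z1 :=
      fun v hv => Finset.mem_filter.mpr ⟨Finset.mem_univ v, hS₂' v hv⟩
    have heq : R.filter (fun w => b w = z1) = (Finset.univ.filter fun v => b v = z1) \ S₂ := by
      ext v
      simp only [Finset.mem_filter, Finset.mem_sdiff, Finset.mem_univ, true_and]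
      constructor
      · rintro ⟨hv, hb⟩; exact ⟨hb, ((hRmem v).1 hv).2⟩
      · rintro ⟨hb, h2v⟩
        exact ⟨(hRmem v).2 ⟨fun h1v => hzne ((hS₁' v h1v).symm.trans hb), h2v⟩, hb⟩
    have hle : m ≤ (Finset.univ.filter fun v => b v = z1).card :=
      hcard₂ ▸ Finset.card_le_card hsub
    rw [heq, Finset.card_sdiff_of_subset hsub, hcard₂, Nat.cast_sub hle, hnb]
  have hcO : ∀ h : Fin K, h ∈ (Finset.univ \ {z0, z1} : Finset (Fin K)) →
      ((R.filter fun w => b w = h).card : ℝ) = (nb h : ℝ) := by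
    intro h hh
    have hh' := Finset.mem_sdiff.mp hh
    have hh0 : h ≠ z0 := fun e => hh'.2 (by simp [e])
    have hh1 : h ≠ z1 := fun e => hh'.2 (by simp [e])
    have heq : R.filter (fun w => b w = h) = Finset.univ.filter fun v => b v = h := by
      ext v
      simp only [Finset.mem_filter, Finset.mem_univ, true_and]
      constructor
      · rintro ⟨_, hb⟩; exact hb
      · intro hb
        exact ⟨(hRmem v).2 ⟨fun h1v => hh0 (hb.symm.trans (hS₁' v h1v)),
          fun h2v => hh1 (hb.symm.trans (hS₂' v h2v))⟩, hb⟩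
    rw [heq, hnb]
  have hFsplit : ∀ c : Fin K → ℝ,
      ∑ h : Fin K, c h = c z0 + c z1 + ∑ h ∈ (Finset.univ \ {z0, z1} : Finset (Fin K)), c h := by
    intro c
    rw [← Finset.sum_sdiff (Finset.subset_univ ({z0, z1} : Finset (Fin K))),
      Finset.sum_pair hzne]
    ring
  have hTval : T = ((nb z0 : ℝ) - m) * (ν ^ 2 * (Λ z0 z0 - Λ z1 z0) ^ 2)
      + ((nb z1 : ℝ) - m) * (ν ^ 2 * (Λ z0 z1 - Λ z1 z1) ^ 2)
      + ∑ h ∈ (Finset.univ \ {z0, z1} : Finset (Fin K)),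
          (nb h : ℝ) * (ν ^ 2 * (Λ z0 h - Λ z1 h) ^ 2) := by
    rw [hfib, hFsplit, hc0, hc1]
    congr 1
    exact Finset.sum_congr rfl fun h hh => by rw [hcO h hh]
  rw [main, hTval, hΛ.apply z0 z1]
  have hlast : ∑ h ∈ (Finset.univ \ {z0, z1} : Finset (Fin K)),
      (nb h : ℝ) * (ν ^ 2 * (Λ z0 h - Λ z1 h) ^ 2)
      = ∑ h ∈ (Finset.univ \ {z0, z1} : Finset (Fin K)),
        (nb h : ℝ) * ν ^ 2 * (Λ h z0 - Λ h z1) ^ 2 := by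
    exact Finset.sum_congr rfl fun h _ => by rw [hΛ.apply h z0, hΛ.apply h z1]; ring
  rw [hlast]
  ring
end
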